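/- arXiv:1110.2430 — 2 statements merged into one kernel-verified Lean document; each statement's English description precedes it below -/
import Mathlib

section
/- A transitive model of ZFC⁻ (with replacement but possibly not collection) that admits a definable global well-ordering of its universe satisfies the collection scheme. -/
universe u

/-- First-order formulas of set theory with `n` free variables (de Bruijn style),
with primitive bounded quantifiers. -/
inductive Fml : ℕ → Type
  | mem {n} (i j : Fin n) : Fml n
  | eq {n} (i j : Fin n) : Fml n
  | not {n} : Fml n → Fml n
  | and {n} : Fml n → Fml n → Fml n
  | ball {n} (i : Fin n) : Fml (n + 1) → Fml n
  | bex {n} (i : Fin n) : Fml (n + 1) → Fml n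
  | all {n} : Fml (n + 1) → Fml n
  | ex {n} : Fml (n + 1) → Fml n

/-- Δ₀ formulas: only bounded quantifiers. -/
inductive IsDelta0 : ∀ {n}, Fml n → Prop
  | mem {n} (i j : Fin n) : IsDelta0 (Fml.mem i j)
  | eq {n} (i j : Fin n) : IsDelta0 (Fml.eq i j)
  | not {n} {φ : Fml n} : IsDelta0 φ → IsDelta0 φ.not
  | and {n} {φ ψ : Fml n} : IsDelta0 φ → IsDelta0 ψ → IsDelta0 (φ.and ψ)
  | ball {n} (i : Fin n) {φ : Fml (n + 1)} : IsDelta0 φ → IsDelta0 (Fml.ball i φ)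
  | bex {n} (i : Fin n) {φ : Fml (n + 1)} : IsDelta0 φ → IsDelta0 (Fml.bex i φ)

/-- Σ₁ formulas: an unbounded existential quantifier applied to a Δ₀ formula. -/
def IsSigma1 {n} (φ : Fml n) : Prop := ∃ ψ : Fml (n + 1), IsDelta0 ψ ∧ φ = Fml.ex ψ

/-- Π₁ formulas: an unbounded universal quantifier applied to a Δ₀ formula. -/
def IsPi1 {n} (φ : Fml n) : Prop := ∃ ψ : Fml (n + 1), IsDelta0 ψ ∧ φ = Fml.all ψ

/-- Satisfaction in an abstract ∈-structure `(α, E)`. -/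
def Sat {α : Type u} (E : α → α → Prop) : ∀ {n}, Fml n → (Fin n → α) → Prop
  | _, .mem i j, v => E (v i) (v j)
  | _, .eq i j, v => v i = v j
  | _, .not φ, v => ¬ Sat E φ v
  | _, .and φ ψ, v => Sat E φ v ∧ Sat E ψ v
  | _, .ball i φ, v => ∀ a, E a (v i) → Sat E φ (Fin.snoc v a)
  | _, .bex i φ, v => ∃ a, E a (v i) ∧ Sat E φ (Fin.snoc v a)
  | _, .all φ, v => ∀ a, Sat E φ (Fin.snoc v a)
  | _, .ex φ, v => ∃ a, Sat E φ (Fin.snoc v a)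

/-- Satisfaction in a structure with a (possibly non-trivial) equality interpretation,
as used for (pre-quotient) ultrapowers. -/
def Sat2 {α : Type u} (Eq' E : α → α → Prop) : ∀ {n}, Fml n → (Fin n → α) → Prop
  | _, .mem i j, v => E (v i) (v j)
  | _, .eq i j, v => Eq' (v i) (v j)
  | _, .not φ, v => ¬ Sat2 Eq' E φ v
  | _, .and φ ψ, v => Sat2 Eq' E φ v ∧ Sat2 Eq' E ψ v
  | _, .ball i φ, v => ∀ a, E a (v i) → Sat2 Eq' E φ (Fin.snoc v a)
  | _, .bex i φ, v => ∃ a, E a (v i) ∧ Sat2 Eq' E φ (Fin.snoc v a)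
  | _, .all φ, v => ∀ a, Sat2 Eq' E φ (Fin.snoc v a)
  | _, .ex φ, v => ∃ a, Sat2 Eq' E φ (Fin.snoc v a)

/-- Satisfaction in a class `M` of ZF-sets, with quantifiers relativized to `M`. -/
def SatC (M : Set ZFSet.{u}) : ∀ {n}, Fml n → (Fin n → ZFSet.{u}) → Prop
  | _, .mem i j, v => v i ∈ v j
  | _, .eq i j, v => v i = v j
  | _, .not φ, v => ¬ SatC M φ v
  | _, .and φ ψ, v => SatC M φ v ∧ SatC M ψ v
  | _, .ball i φ, v => ∀ a ∈ M, a ∈ v i → SatC M φ (Fin.snoc v a)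
  | _, .bex i φ, v => ∃ a ∈ M, a ∈ v i ∧ SatC M φ (Fin.snoc v a)
  | _, .all φ, v => ∀ a ∈ M, SatC M φ (Fin.snoc v a)
  | _, .ex φ, v => ∃ a ∈ M, SatC M φ (Fin.snoc v a)

/-- A class of ZF-sets is transitive. -/
def TransCls (M : Set ZFSet.{u}) : Prop := ∀ x ∈ M, ∀ y : ZFSet, y ∈ x → y ∈ M

/- Semantic versions of the axioms of set theory for a class `M` of ZF-sets. -/

def AxExt (M : Set ZFSet.{u}) : Prop :=
  ∀ x ∈ M, ∀ y ∈ M, (∀ z : ZFSet, z ∈ x ↔ z ∈ y) → x = y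

def AxFound (M : Set ZFSet.{u}) : Prop :=
  ∀ x ∈ M, x ≠ ∅ → ∃ y : ZFSet, y ∈ x ∧ ∀ z : ZFSet, z ∈ x → z ∉ y

def AxPair (M : Set ZFSet.{u}) : Prop := ∀ x ∈ M, ∀ y ∈ M, ({x, y} : ZFSet) ∈ M

def AxUnion (M : Set ZFSet.{u}) : Prop := ∀ x ∈ M, ZFSet.sUnion x ∈ M

def AxInf (M : Set ZFSet.{u}) : Prop := ZFSet.omega ∈ M

def AxPow (M : Set ZFSet.{u}) : Prop := ∀ x ∈ M, ZFSet.powerset x ∈ M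

def AxSep (M : Set ZFSet.{u}) : Prop :=
  ∀ (n : ℕ) (φ : Fml (n + 1)) (v : Fin n → ZFSet), (∀ i, v i ∈ M) →
    ∀ x ∈ M, ZFSet.sep (fun y => SatC M φ (Fin.snoc v y)) x ∈ M

def AxRepl (M : Set ZFSet.{u}) : Prop :=
  ∀ (n : ℕ) (φ : Fml (n + 2)) (v : Fin n → ZFSet), (∀ i, v i ∈ M) →
    ∀ A ∈ M,
      (∀ a : ZFSet, a ∈ A →
        ∃! b : ZFSet, b ∈ M ∧ SatC M φ (Fin.snoc (Fin.snoc v a) b)) →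
      ∃ B ∈ M, ∀ b : ZFSet,
        b ∈ B ↔ ∃ a : ZFSet, a ∈ A ∧ SatC M φ (Fin.snoc (Fin.snoc v a) b)

def AxColl (M : Set ZFSet.{u}) : Prop :=
  ∀ (n : ℕ) (φ : Fml (n + 2)) (v : Fin n → ZFSet), (∀ i, v i ∈ M) →
    ∀ A ∈ M,
      (∀ a : ZFSet, a ∈ A → ∃ b ∈ M, SatC M φ (Fin.snoc (Fin.snoc v a) b)) →
      ∃ B ∈ M, ∀ a : ZFSet, a ∈ A →
        ∃ b : ZFSet, b ∈ B ∧ SatC M φ (Fin.snoc (Fin.snoc v a) b)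

/-- The well-ordering principle: every set carries a well-order (in `M`). -/
def AxWO (M : Set ZFSet.{u}) : Prop :=
  ∀ x ∈ M, ∃ r ∈ M,
    (∀ p ∈ r, ∃ a, a ∈ x ∧ ∃ b, b ∈ x ∧ p = ZFSet.pair a b) ∧
    IsWellOrder x.toSet.Elem (fun a b => ZFSet.pair a.1 b.1 ∈ r)

/-- ZFC minus power set, with replacement (the theory called `ZFC-` in the paper). -/
def ZFCminusRepl (M : Set ZFSet.{u}) : Prop :=
  AxExt M ∧ AxFound M ∧ AxPair M ∧ AxUnion M ∧ AxInf M ∧ AxSep M ∧ AxRepl M ∧ AxWO M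

/-- ZFC minus power set, with collection (the theory called `ZFC⁻` in the paper). -/
def ZFCminusColl (M : Set ZFSet.{u}) : Prop := ZFCminusRepl M ∧ AxColl M

/-- The (semantic) ZFC axioms for a transitive class. -/
def ZFCax (M : Set ZFSet.{u}) : Prop := ZFCminusRepl M ∧ AxPow M

/-- `f` is (coded as) a set-function with domain `d`. -/
def IsFnOn (d f : ZFSet.{u}) : Prop :=
  (∀ p ∈ f, ∃ a, a ∈ d ∧ ∃ b : ZFSet, p = ZFSet.pair a b) ∧
  ∀ a, a ∈ d → ∃! b : ZFSet, ZFSet.pair a b ∈ f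

/-- Application of a set-coded function. -/
noncomputable def app (f a : ZFSet.{u}) : ZFSet.{u} :=
  Classical.epsilon fun b => ZFSet.pair a b ∈ f

/-- The class of sets of hereditary size less than `κ`. -/
def Hclass (κ : Cardinal.{u + 1}) : Set ZFSet.{u} :=
  {x | ∃ t : ZFSet, t.IsTransitive ∧ x ⊆ t ∧ Cardinal.mk t.toSet < κ}

/-- Extend a variable renaming under a binder. -/
def extRen {m k : ℕ} (σ : Fin m → Fin k) : Fin (m + 1) → Fin (k + 1) :=
  Fin.snoc (fun i => (σ i).castSucc) (Fin.last k)

/-- Rename the variables of a formula. -/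
def Fml.ren : ∀ {m k : ℕ}, (Fin m → Fin k) → Fml m → Fml k
  | _, _, σ, .mem i j => .mem (σ i) (σ j)
  | _, _, σ, .eq i j => .eq (σ i) (σ j)
  | _, _, σ, .not φ => .not (φ.ren σ)
  | _, _, σ, .and φ ψ => .and (φ.ren σ) (ψ.ren σ)
  | _, _, σ, .ball i φ => .ball (σ i) (φ.ren (extRen σ))
  | _, _, σ, .bex i φ => .bex (σ i) (φ.ren (extRen σ))
  | _, _, σ, .all φ => .all (φ.ren (extRen σ))
  | _, _, σ, .ex φ => .ex (φ.ren (extRen σ))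

lemma snoc_comp_extRen {m k : ℕ} (σ : Fin m → Fin k) (v : Fin k → ZFSet.{u})
    (a : ZFSet.{u}) : (Fin.snoc v a) ∘ extRen σ = Fin.snoc (v ∘ σ) a := by
  funext i
  refine Fin.lastCases ?_ (fun j => ?_) i
  · simp [extRen, Fin.snoc_last]
  · simp [extRen, Fin.snoc_castSucc, Function.comp]

lemma satC_ren (M : Set ZFSet.{u}) : ∀ {m k : ℕ} (φ : Fml m) (σ : Fin m → Fin k)
    (v : Fin k → ZFSet.{u}), SatC M (φ.ren σ) v ↔ SatC M φ (v ∘ σ)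
  | _, _, .mem i j, σ, v => Iff.rfl
  | _, _, .eq i j, σ, v => Iff.rfl
  | _, _, .not φ, σ, v => by
      simp only [Fml.ren, SatC, satC_ren M φ σ v]
  | _, _, .and φ ψ, σ, v => by
      simp only [Fml.ren, SatC, satC_ren M φ σ v, satC_ren M ψ σ v]
  | _, _, .ball i φ, σ, v => by
      simp only [Fml.ren, SatC]
      refine forall_congr' fun a => forall_congr' fun _ => imp_congr Iff.rfl ?_
      rw [satC_ren M φ (extRen σ), snoc_comp_extRen]
  | _, _, .bex i φ, σ, v => by
      simp only [Fml.ren, SatC]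
      refine exists_congr fun a => and_congr Iff.rfl (and_congr Iff.rfl ?_)
      rw [satC_ren M φ (extRen σ), snoc_comp_extRen]
  | _, _, .all φ, σ, v => by
      simp only [Fml.ren, SatC]
      refine forall_congr' fun a => forall_congr' fun _ => ?_
      rw [satC_ren M φ (extRen σ), snoc_comp_extRen]
  | _, _, .ex φ, σ, v => by
      simp only [Fml.ren, SatC]
      refine exists_congr fun a => and_congr Iff.rfl ?_
      rw [satC_ren M φ (extRen σ), snoc_comp_extRen]

/-- a transitive model of ZFC⁻ (replacement version) with a definable
global well-ordering satisfies the collection scheme. -/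

theorem global_wellorder_implies_collection (M : Set ZFSet) (hM : TransCls M)
    (hzfc : ZFCminusRepl M) (ρ : Fml 2)
    (hwo : IsWellOrder M.Elem
      (fun a b => SatC M ρ ![(a : ZFSet), (b : ZFSet)])) :
    AxColl M := by
  intro n φ v hv A hA hwit
  -- the relation r on M given by ρ
  set r : M.Elem → M.Elem → Prop :=
    fun a b => SatC M ρ ![(a : ZFSet), (b : ZFSet)] with hr
  -- renamings
  -- σρ : Fin 2 → Fin (n+3), 0 ↦ last (b'), 1 ↦ n+1 (b)
  let σρ : Fin 2 → Fin (n + 3) := ![Fin.last (n + 2), (Fin.last (n + 1)).castSucc]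
  -- σφ : Fin (n+2) → Fin (n+3), first n+1 coords unchanged, last ↦ last
  let σφ : Fin (n + 2) → Fin (n + 3) :=
    Fin.snoc (fun j : Fin (n + 1) => j.castSucc.castSucc) (Fin.last (n + 2))
  let χ : Fml (n + 3) := ((ρ.ren σρ).and (φ.ren σφ)).not
  let ψ : Fml (n + 2) := φ.and (Fml.all χ)
  -- semantics of ψ
  have hψsem : ∀ (a b : ZFSet), SatC M ψ (Fin.snoc (Fin.snoc v a) b) ↔
      (SatC M φ (Fin.snoc (Fin.snoc v a) b) ∧
        ∀ b' ∈ M, SatC M ρ ![b', b] → ¬ SatC M φ (Fin.snoc (Fin.snoc v a) b')) := by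
    intro a b
    show _ ∧ _ ↔ _
    refine and_congr Iff.rfl ?_
    show (∀ b' ∈ M, ¬ (SatC M (ρ.ren σρ) _ ∧ SatC M (φ.ren σφ) _)) ↔ _
    refine forall_congr' fun b' => forall_congr' fun _ => ?_
    rw [not_and, satC_ren, satC_ren]
    have h1 : (Fin.snoc (Fin.snoc (Fin.snoc v a) b) b') ∘ σρ = ![b', b] := by
      funext i
      fin_cases i <;> simp [σρ, Fin.snoc_last, Fin.snoc_castSucc]
    have h2 : (Fin.snoc (Fin.snoc (Fin.snoc v a) b) b') ∘ σφ =
        Fin.snoc (Fin.snoc v a) b' := by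
      funext i
      refine Fin.lastCases ?_ (fun j => ?_) i
      · simp [σφ, Fin.snoc_last]
      · simp [σφ, Function.comp, Fin.snoc_castSucc]
    rw [h1, h2]
  -- every a ∈ A has a unique least witness
  have hAM : ∀ a ∈ A, a ∈ M := fun a ha => hM A hA a ha
  have huniq : ∀ a : ZFSet, a ∈ A →
      ∃! b : ZFSet, b ∈ M ∧ SatC M ψ (Fin.snoc (Fin.snoc v a) b) := by
    intro a ha
    obtain ⟨b0, hb0M, hb0⟩ := hwit a ha
    -- the set of witnesses, as a subset of M.Elem
    let S : Set M.Elem := {b | SatC M φ (Fin.snoc (Fin.snoc v a) (b : ZFSet))}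
    have hS : S.Nonempty := ⟨⟨b0, hb0M⟩, hb0⟩
    obtain ⟨m, hmS, hmin⟩ := hwo.wf.has_min S hS
    refine ⟨(m : ZFSet), ⟨m.2, ?_⟩, ?_⟩
    · rw [hψsem]
      refine ⟨hmS, fun b' hb'M hlt hsat => hmin ⟨b', hb'M⟩ hsat hlt⟩
    · rintro b ⟨hbM, hbψ⟩
      rw [hψsem] at hbψ
      obtain ⟨hbφ, hbleast⟩ := hbψ
      haveI := hwo
      rcases trichotomous_of r ⟨b, hbM⟩ m with h | h | h
      · exact (hmin ⟨b, hbM⟩ hbφ h).elim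
      · exact congrArg Subtype.val h
      · exact absurd hmS (hbleast (m : ZFSet) m.2 h)
  obtain ⟨B, hBM, hB⟩ := hzfc.2.2.2.2.2.2.1 n ψ v hv A hA huniq
  refine ⟨B, hBM, fun a ha => ?_⟩
  obtain ⟨b, ⟨hbM, hbψ⟩, -⟩ := huniq a ha
  exact ⟨b, (hB b).2 ⟨a, ha, hbψ⟩, ((hψsem a b).1 hbψ).1⟩
end

section
/- The Łoś theorem holds for Δ₀ formulas for ultrapowers of a transitive model M of ZFC⁻ (replacement version) by an M-ultrafilter μ on a cardinal κ in M, using functions in M: for any Δ₀ formula φ and functions f₁,...,f_k : κ → M in M, [f₁],...,[f_k] satisfy φ in the ultrapower if and only if {α < κ : M ⊨ φ(f₁(α),...,f_k(α))} ∈ μ. -/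
universe u

/-- `κ` is a cardinal in the sense of `M`: an ordinal not surjected onto by any
smaller ordinal via a function in `M`. -/
def IsCardinalIn (M : Set ZFSet.{u}) (κ : ZFSet.{u}) : Prop :=
  κ.IsOrdinal ∧ ∀ β : ZFSet, β ∈ κ →
    ¬∃ f, f ∈ M ∧ IsFnOn β f ∧ ∀ b : ZFSet, b ∈ κ → ∃ a : ZFSet, a ∈ β ∧ app f a = b

/-- `μ` is an `M`-ultrafilter on `κ`: an ultrafilter on the Boolean algebra
`P(κ) ∩ M`. -/
def MUltrafilter (M : Set ZFSet.{u}) (κ : ZFSet.{u}) (μ : Set ZFSet.{u}) : Prop :=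
  (∀ A ∈ μ, A ∈ M ∧ A ⊆ κ) ∧ κ ∈ μ ∧ (∅ : ZFSet) ∉ μ ∧
  (∀ A ∈ μ, ∀ B : ZFSet, B ∈ M → B ⊆ κ → A ⊆ B → B ∈ μ) ∧
  (∀ A ∈ μ, ∀ B ∈ μ, A ∩ B ∈ μ) ∧
  (∀ A : ZFSet, A ∈ M → A ⊆ κ → A ∈ μ ∨ κ \ A ∈ μ)

/-- The domain of the ultrapower: functions on `κ` belonging to `M`. -/
def UPt (M : Set ZFSet.{u}) (κ : ZFSet.{u}) : Type (u + 1) :=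
  {f : ZFSet // f ∈ M ∧ IsFnOn κ f}

/-- μ-a.e. equality of functions. -/
def upEq (κ : ZFSet.{u}) (μ : Set ZFSet.{u}) {M : Set ZFSet.{u}}
    (f g : UPt M κ) : Prop :=
  ZFSet.sep (fun α => app f.1 α = app g.1 α) κ ∈ μ

/-- μ-a.e. membership of functions. -/
def upMem (κ : ZFSet.{u}) (μ : Set ZFSet.{u}) {M : Set ZFSet.{u}}
    (f g : UPt M κ) : Prop :=
  ZFSet.sep (fun α => app f.1 α ∈ app g.1 α) κ ∈ μ

/-! ### Auxiliary development for the Łoś theorem -/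

section Aux

/-- Derived disjunction. -/
def Fml.or {n} (φ ψ : Fml n) : Fml n := (φ.not.and ψ.not).not

/-- Derived implication. -/
def Fml.imp {n} (φ ψ : Fml n) : Fml n := (φ.and ψ.not).not

/-- Derived biconditional. -/
def Fml.iff {n} (φ ψ : Fml n) : Fml n := (φ.imp ψ).and (ψ.imp φ)

variable {M : Set ZFSet}

@[simp] lemma satC_or {n} (φ ψ : Fml n) (v : Fin n → ZFSet) :
    SatC M (φ.or ψ) v ↔ (SatC M φ v ∨ SatC M ψ v) := by
  simp only [Fml.or, SatC]; tauto

@[simp] lemma satC_imp {n} (φ ψ : Fml n) (v : Fin n → ZFSet) :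
    SatC M (φ.imp ψ) v ↔ (SatC M φ v → SatC M ψ v) := by
  simp only [Fml.imp, SatC]; tauto

@[simp] lemma satC_iff {n} (φ ψ : Fml n) (v : Fin n → ZFSet) :
    SatC M (φ.iff ψ) v ↔ (SatC M φ v ↔ SatC M ψ v) := by
  simp only [Fml.iff, SatC, satC_imp]; tauto

/-- Lift a renaming under a binder. -/
def Fml.liftR {n m} (ρ : Fin n → Fin m) : Fin (n+1) → Fin (m+1) :=
  Fin.snoc (fun i => (ρ i).castSucc) (Fin.last m)

/-- Rename the free variables of a formula. -/
def Fml.rename : ∀ {n m}, (Fin n → Fin m) → Fml n → Fml m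
  | _, _, ρ, .mem i j => .mem (ρ i) (ρ j)
  | _, _, ρ, .eq i j => .eq (ρ i) (ρ j)
  | _, _, ρ, .not φ => .not (φ.rename ρ)
  | _, _, ρ, .and φ ψ => .and (φ.rename ρ) (ψ.rename ρ)
  | _, _, ρ, .ball i φ => .ball (ρ i) (φ.rename (Fml.liftR ρ))
  | _, _, ρ, .bex i φ => .bex (ρ i) (φ.rename (Fml.liftR ρ))
  | _, _, ρ, .all φ => .all (φ.rename (Fml.liftR ρ))
  | _, _, ρ, .ex φ => .ex (φ.rename (Fml.liftR ρ))

lemma snoc_comp_liftR {n m} (ρ : Fin n → Fin m) (v : Fin m → ZFSet) (a : ZFSet) :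
    (Fin.snoc v a : Fin (m+1) → ZFSet) ∘ Fml.liftR ρ = Fin.snoc (v ∘ ρ) a := by
  funext i
  refine Fin.lastCases ?_ (fun j => ?_) i <;>
    simp [Fml.liftR, Fin.snoc_last, Fin.snoc_castSucc]

lemma satC_rename {n} (φ : Fml n) : ∀ {m} (ρ : Fin n → Fin m) (v : Fin m → ZFSet),
    SatC M (φ.rename ρ) v ↔ SatC M φ (v ∘ ρ) := by
  induction φ with
  | mem i j => intro m ρ v; exact Iff.rfl
  | eq i j => intro m ρ v; exact Iff.rfl
  | not φ ih => intro m ρ v; simp only [Fml.rename, SatC, ih]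
  | and φ ψ ihφ ihψ => intro m ρ v; simp only [Fml.rename, SatC, ihφ, ihψ]
  | ball i φ ih =>
      intro m ρ v
      simp only [Fml.rename, SatC, ih, snoc_comp_liftR, Function.comp_apply]
  | bex i φ ih =>
      intro m ρ v
      simp only [Fml.rename, SatC, ih, snoc_comp_liftR, Function.comp_apply]
  | all φ ih =>
      intro m ρ v
      simp only [Fml.rename, SatC, ih, snoc_comp_liftR]
  | ex φ ih =>
      intro m ρ v
      simp only [Fml.rename, SatC, ih, snoc_comp_liftR]

lemma snoc_mem_M {m} {v : Fin m → ZFSet} (hv : ∀ i, v i ∈ M) {a : ZFSet} (ha : a ∈ M) :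
    ∀ i, (Fin.snoc v a : Fin (m+1) → ZFSet) i ∈ M := by
  intro i
  refine Fin.lastCases ?_ (fun j => ?_) i <;> simp [ha, hv]

/-- Internal formula expressing `v Is = {v Ia, v Ib}`. -/
def upairFml {m} (Is Ia Ib : Fin m) : Fml m :=
  .all ((Fml.mem (Fin.last m) Is.castSucc).iff
    ((Fml.eq (Fin.last m) Ia.castSucc).or (Fml.eq (Fin.last m) Ib.castSucc)))

lemma satC_upairFml (hM : TransCls M) {m} (Is Ia Ib : Fin m) (v : Fin m → ZFSet)
    (hv : ∀ i, v i ∈ M) :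
    SatC M (upairFml Is Ia Ib) v ↔ v Is = {v Ia, v Ib} := by
  have hunf : SatC M (upairFml Is Ia Ib) v ↔
      ∀ a ∈ M, (a ∈ v Is ↔ a = v Ia ∨ a = v Ib) := by
    simp only [upairFml, SatC, satC_iff, satC_or, Fin.snoc_last, Fin.snoc_castSucc]
  rw [hunf]
  constructor
  · intro h
    apply ZFSet.ext
    intro z
    rw [ZFSet.mem_pair]
    constructor
    · intro hz; exact (h z (hM _ (hv Is) z hz)).1 hz
    · rintro (rfl | rfl)
      · exact (h _ (hv Ia)).2 (Or.inl rfl)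
      · exact (h _ (hv Ib)).2 (Or.inr rfl)
  · intro h a _
    rw [h, ZFSet.mem_pair]

lemma zfpair_def (a b : ZFSet) : ZFSet.pair a b = {{a}, {a, b}} := rfl

lemma zfpair_dup (a : ZFSet) : ({a, a} : ZFSet) = {a} := by
  apply ZFSet.ext; intro z; simp [ZFSet.mem_pair]

/-- Internal formula expressing `v Ip = ZFSet.pair (v Ia) (v Ib)`. -/
def pairFml {m} (Ip Ia Ib : Fin m) : Fml m :=
  .ex (.ex (((upairFml ((Fin.last m).castSucc)
      (Ia.castSucc.castSucc) (Ia.castSucc.castSucc)).and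
    (upairFml (Fin.last (m+1)) (Ia.castSucc.castSucc) (Ib.castSucc.castSucc))).and
    (upairFml (Ip.castSucc.castSucc) ((Fin.last m).castSucc) (Fin.last (m+1)))))

lemma satC_pairFml (hM : TransCls M) {m} (Ip Ia Ib : Fin m) (v : Fin m → ZFSet)
    (hv : ∀ i, v i ∈ M) :
    SatC M (pairFml Ip Ia Ib) v ↔ v Ip = ZFSet.pair (v Ia) (v Ib) := by
  constructor
  · rintro ⟨s, hsM, t, htM, h⟩
    have hv2 : ∀ i, (Fin.snoc (Fin.snoc v s) t : Fin (m+2) → ZFSet) i ∈ M :=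
      snoc_mem_M (snoc_mem_M hv hsM) htM
    obtain ⟨⟨h1, h2⟩, h3⟩ := h
    rw [satC_upairFml hM _ _ _ _ hv2] at h1 h2 h3
    simp only [Fin.snoc_castSucc, Fin.snoc_last] at h1 h2 h3
    rw [h3, h1, h2, zfpair_dup, zfpair_def]
  · intro h
    have hsM : ({v Ia} : ZFSet) ∈ M := by
      refine hM _ (hv Ip) _ ?_
      rw [h, zfpair_def, ZFSet.mem_pair]; exact Or.inl rfl
    have htM : ({v Ia, v Ib} : ZFSet) ∈ M := by
      refine hM _ (hv Ip) _ ?_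
      rw [h, zfpair_def, ZFSet.mem_pair]; exact Or.inr rfl
    have hv2 := snoc_mem_M (snoc_mem_M hv hsM) htM
    refine ⟨{v Ia}, hsM, {v Ia, v Ib}, htM, ⟨⟨?_, ?_⟩, ?_⟩⟩
    · rw [satC_upairFml hM _ _ _ _ hv2]
      simp only [Fin.snoc_castSucc, Fin.snoc_last]
      rw [zfpair_dup]
    · rw [satC_upairFml hM _ _ _ _ hv2]
      simp only [Fin.snoc_castSucc, Fin.snoc_last]
    · rw [satC_upairFml hM _ _ _ _ hv2]
      simp only [Fin.snoc_castSucc, Fin.snoc_last]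
      rw [h, zfpair_def]

/-- Internal formula expressing `ZFSet.pair (v Ia) (v Ib) ∈ v If`. -/
def pairMemFml {m} (If Ia Ib : Fin m) : Fml m :=
  .ex ((Fml.mem (Fin.last m) If.castSucc).and
    (pairFml (Fin.last m) Ia.castSucc Ib.castSucc))

lemma satC_pairMemFml (hM : TransCls M) {m} (If Ia Ib : Fin m) (v : Fin m → ZFSet)
    (hv : ∀ i, v i ∈ M) :
    SatC M (pairMemFml If Ia Ib) v ↔ ZFSet.pair (v Ia) (v Ib) ∈ v If := by
  constructor
  · rintro ⟨p, hpM, h1, h2⟩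
    rw [satC_pairFml hM _ _ _ _ (snoc_mem_M hv hpM)] at h2
    simp only [Fin.snoc_castSucc, Fin.snoc_last] at h2
    have h1' : p ∈ v If := by
      simpa only [SatC, Fin.snoc_castSucc, Fin.snoc_last] using h1
    rwa [← h2]
  · intro h
    refine ⟨ZFSet.pair (v Ia) (v Ib), hM _ (hv If) _ h, ?_, ?_⟩
    · simp only [SatC, Fin.snoc_castSucc, Fin.snoc_last]
      exact h
    · rw [satC_pairFml hM _ _ _ _ (snoc_mem_M hv (hM _ (hv If) _ h))]
      simp only [Fin.snoc_castSucc, Fin.snoc_last]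

/-! #### Terms and simultaneous substitution -/

/-- Simple terms over a context of `m` variables: a variable, or the application
of a (set-coded) function variable to an argument variable. -/
inductive TermT (m : ℕ)
  | var : Fin m → TermT m
  | ap : Fin m → Fin m → TermT m

/-- Embed a term along a renaming. -/
def TermT.emb {m m'} (ρ : Fin m → Fin m') : TermT m → TermT m'
  | .var i => .var (ρ i)
  | .ap f a => .ap (ρ f) (ρ a)

/-- Evaluate a term. -/
noncomputable def evalT {m} (v : Fin m → ZFSet) : TermT m → ZFSet
  | .var i => v i
  | .ap f a => app (v f) (v a)

/-- Well-definedness of a term at a valuation. -/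
def TOK {m} (v : Fin m → ZFSet) : TermT m → Prop
  | .var _ => True
  | .ap f a => ∃! b, ZFSet.pair (v a) b ∈ v f

lemma app_spec {f a : ZFSet} (h : ∃ b, ZFSet.pair a b ∈ f) :
    ZFSet.pair a (app f a) ∈ f :=
  Classical.epsilon_spec h

lemma app_eq {f a b : ZFSet} (h : ∃! b, ZFSet.pair a b ∈ f)
    (hb : ZFSet.pair a b ∈ f) : app f a = b :=
  h.unique (app_spec h.exists) hb

lemma mem_M_of_pair_mem (hM : TransCls M) {f a b : ZFSet} (hf : f ∈ M)
    (h : ZFSet.pair a b ∈ f) : a ∈ M ∧ b ∈ M := by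
  have hp : ZFSet.pair a b ∈ M := hM _ hf _ h
  have hab : ({a, b} : ZFSet) ∈ M := by
    refine hM _ hp _ ?_
    rw [zfpair_def, ZFSet.mem_pair]; exact Or.inr rfl
  exact ⟨hM _ hab _ (by rw [ZFSet.mem_pair]; exact Or.inl rfl),
    hM _ hab _ (by rw [ZFSet.mem_pair]; exact Or.inr rfl)⟩

lemma evalT_mem_M (hM : TransCls M) {m} {v : Fin m → ZFSet} (hv : ∀ i, v i ∈ M)
    {t : TermT m} (ht : TOK v t) : evalT v t ∈ M := by
  cases t with
  | var i => exact hv i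
  | ap f a => exact (mem_M_of_pair_mem hM (hv f) (app_spec ht.exists)).2

/-- Internal formula expressing `v Ib = evalT v t`. -/
def defFml {m} (t : TermT m) (Ib : Fin m) : Fml m :=
  match t with
  | .var i => .eq Ib i
  | .ap f a => pairMemFml f a Ib

lemma satC_defFml (hM : TransCls M) {m} {v : Fin m → ZFSet} (hv : ∀ i, v i ∈ M)
    (t : TermT m) (ht : TOK v t) (Ib : Fin m) :
    SatC M (defFml t Ib) v ↔ v Ib = evalT v t := by
  cases t with
  | var i => exact Iff.rfl
  | ap f a =>
      show SatC M (pairMemFml f a Ib) v ↔ _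
      rw [satC_pairMemFml hM _ _ _ _ hv]
      constructor
      · intro h; exact (ht.unique (app_spec ht.exists) h).symm
      · intro h; rw [h]; exact app_spec ht.exists

lemma append_zero {α : Sort*} {m} (v : Fin m → α) (w : Fin 0 → α) :
    Fin.append v w = v := by
  funext i
  exact Fin.append_left v w i

lemma append_mem_M {m k} {v : Fin m → ZFSet} {w : Fin k → ZFSet}
    (hv : ∀ i, v i ∈ M) (hw : ∀ j, w j ∈ M) :
    ∀ i, Fin.append v w i ∈ M := by
  intro i
  refine Fin.addCases (fun l => ?_) (fun r => ?_) i
  · rw [Fin.append_left]; exact hv l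
  · rw [Fin.append_right]; exact hw r

lemma snoc_append_castAdd {α : Sort*} {m k} (v : Fin m → α) (w : Fin k → α)
    (b : α) (i : Fin m) :
    (Fin.snoc (Fin.append v w) b : Fin (m+k+1) → α) (Fin.castAdd (k+1) i) = v i := by
  have h : (Fin.castAdd (k+1) i : Fin (m+k+1)) = (Fin.castAdd k i).castSucc :=
    Fin.ext rfl
  rw [h, Fin.snoc_castSucc, Fin.append_left]

lemma evalT_emb {m k} (v : Fin m → ZFSet) (w : Fin k → ZFSet) (b : ZFSet)
    (t : TermT m) :
    evalT (Fin.snoc (Fin.append v w) b) (t.emb (Fin.castAdd (k+1))) = evalT v t := by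
  cases t <;> simp only [evalT, TermT.emb, snoc_append_castAdd]

lemma TOK_emb {m k} (v : Fin m → ZFSet) (w : Fin k → ZFSet) (b : ZFSet)
    (t : TermT m) :
    TOK (Fin.snoc (Fin.append v w) b) (t.emb (Fin.castAdd (k+1))) ↔ TOK v t := by
  cases t <;> simp only [TOK, TermT.emb, snoc_append_castAdd]

/-- Simultaneous substitution: bind the last `k` variables of `ψ` to the values
of the terms `σ`. -/
def substAux {m} : ∀ (k : ℕ), (Fin k → TermT m) → Fml (m + k) → Fml m
  | 0, _, ψ => ψ
  | k+1, σ, ψ =>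
      substAux k (fun j => σ j.castSucc)
        (.ex ((defFml ((σ (Fin.last k)).emb (Fin.castAdd (k+1))) (Fin.last (m+k))).and ψ))

lemma satC_substAux (hM : TransCls M) {m} :
    ∀ (k : ℕ) (σ : Fin k → TermT m) (ψ : Fml (m+k)) (v : Fin m → ZFSet),
      (∀ i, v i ∈ M) → (∀ j, TOK v (σ j)) →
      (SatC M (substAux k σ ψ) v ↔
        SatC M ψ (Fin.append v (fun j => evalT v (σ j)))) := by
  intro k
  induction k with
  | zero =>
      intro σ ψ v hv _
      rw [substAux, append_zero]
  | succ k ih =>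
      intro σ ψ v hv hok
      rw [substAux, ih _ _ v hv (fun j => hok _)]
      have hw : ∀ j : Fin k, evalT v (σ j.castSucc) ∈ M :=
        fun j => evalT_mem_M hM hv (hok j.castSucc)
      have hu : ∀ i, Fin.append v (fun j => evalT v (σ j.castSucc)) i ∈ M :=
        append_mem_M hv hw
      have hlasteq : ∀ b : ZFSet,
          Fin.snoc (Fin.append v (fun j : Fin k => evalT v (σ j.castSucc))) b =
            Fin.append v (Fin.snoc (fun j : Fin k => evalT v (σ j.castSucc)) b) := by
        intro b; rw [Fin.append_snoc]
      have hvec : Fin.snoc (fun j : Fin k => evalT v (σ j.castSucc))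
          (evalT v (σ (Fin.last k))) = fun j : Fin (k+1) => evalT v (σ j) := by
        funext j
        refine Fin.lastCases ?_ (fun l => ?_) j
        · rw [Fin.snoc_last]
        · rw [Fin.snoc_castSucc]
      constructor
      · rintro ⟨b, hbM, hdef, hψ⟩
        have hdef' := (satC_defFml hM
          (snoc_mem_M hu hbM) _ ((TOK_emb _ _ _ _).2 (hok (Fin.last k))) _).1 hdef
        rw [Fin.snoc_last, evalT_emb] at hdef'
        rw [hlasteq] at hψ
        rw [← hvec]
        rw [← hdef']
        exact hψ
      · intro hψ
        have hbM : evalT v (σ (Fin.last k)) ∈ M :=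
          evalT_mem_M hM hv (hok (Fin.last k))
        refine ⟨evalT v (σ (Fin.last k)), hbM, ?_, ?_⟩
        · rw [satC_defFml hM (snoc_mem_M hu hbM) _
            ((TOK_emb _ _ _ _).2 (hok (Fin.last k))) _]
          rw [Fin.snoc_last, evalT_emb]
        · rw [hlasteq, hvec]
          exact hψ

/-- Substitute the terms `σ` for the variables of `φ`. -/
def substT {m k} (σ : Fin k → TermT m) (φ : Fml k) : Fml m :=
  substAux k σ (φ.rename (Fin.natAdd m))

lemma satC_substT (hM : TransCls M) {m k} (σ : Fin k → TermT m) (φ : Fml k)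
    (v : Fin m → ZFSet) (hv : ∀ i, v i ∈ M) (hok : ∀ j, TOK v (σ j)) :
    SatC M (substT σ φ) v ↔ SatC M φ (fun j => evalT v (σ j)) := by
  rw [substT, satC_substAux hM k σ _ v hv hok, satC_rename]
  have h : (Fin.append v (fun j => evalT v (σ j))) ∘ Fin.natAdd m =
      fun j => evalT v (σ j) := funext fun j => Fin.append_right _ _ j
  rw [h]

/-! #### Separation sets and ultrafilter facts -/

variable {κ : ZFSet} {μ : Set ZFSet}

lemma upt_exu (g : UPt M κ) {α : ZFSet} (hα : α ∈ κ) :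
    ∃! b, ZFSet.pair α b ∈ g.1 := g.2.2.2 α hα

lemma upt_app_mem_M (hM : TransCls M) (g : UPt M κ) {α : ZFSet} (hα : α ∈ κ) :
    app g.1 α ∈ M :=
  (mem_M_of_pair_mem hM g.2.1 (app_spec (upt_exu g hα).exists)).2

lemma sep_sub (p : ZFSet → Prop) (x : ZFSet) : ZFSet.sep p x ⊆ x :=
  fun _ hz => (ZFSet.mem_sep.1 hz).1

lemma sep_satC_mem_M (hM : TransCls M) (hsep : AxSep M) (hκ : κ ∈ M)
    {n} (φ : Fml n) (fs : Fin n → UPt M κ) :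
    ZFSet.sep (fun α => SatC M φ (fun j => app (fs j).1 α)) κ ∈ M := by
  classical
  have h := hsep n (substT (fun j => TermT.ap j.castSucc (Fin.last n)) φ)
    (fun j => (fs j).1) (fun j => (fs j).2.1) κ hκ
  have hEq : ZFSet.sep (fun α => SatC M φ (fun j => app (fs j).1 α)) κ =
      ZFSet.sep (fun y => SatC M (substT (fun j => TermT.ap j.castSucc (Fin.last n)) φ)
        (Fin.snoc (fun j => (fs j).1) y)) κ := by
    apply ZFSet.ext; intro z
    simp only [ZFSet.mem_sep]
    refine and_congr_right fun hz => ?_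
    have hv : ∀ i, (Fin.snoc (fun j => (fs j).1) z : Fin (n+1) → ZFSet) i ∈ M :=
      snoc_mem_M (fun j => (fs j).2.1) (hM _ hκ _ hz)
    have hok : ∀ j, TOK (Fin.snoc (fun l => (fs l).1) z)
        ((fun j : Fin n => TermT.ap j.castSucc (Fin.last n)) j) := by
      intro j
      simp only [TOK, Fin.snoc_last, Fin.snoc_castSucc]
      exact (fs j).2.2.2 z hz
    rw [satC_substT hM _ φ _ hv hok]
    have he : (fun j => evalT (Fin.snoc (fun l => (fs l).1) z)
        ((fun j : Fin n => TermT.ap j.castSucc (Fin.last n)) j)) =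
        fun j => app (fs j).1 z := by
      funext j
      simp only [evalT, Fin.snoc_last, Fin.snoc_castSucc]
    rw [he]
  rw [hEq]; exact h

lemma uf_meet (hμ : MUltrafilter M κ μ) {A B : ZFSet} (hA : A ∈ μ) (hB : B ∈ μ) :
    ∃ x, x ∈ A ∧ x ∈ B := by
  have hInt : A ∩ B ∈ μ := hμ.2.2.2.2.1 A hA B hB
  by_contra h
  push_neg at h
  have : A ∩ B = ∅ := by
    rw [ZFSet.eq_empty]
    intro y hy
    rw [ZFSet.mem_inter] at hy
    exact h y hy.1 hy.2
  rw [this] at hInt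
  exact hμ.2.2.1 hInt

lemma uf_not_iff (hμ : MUltrafilter M κ μ) {A : ZFSet} (hAM : A ∈ M) (hAκ : A ⊆ κ) :
    A ∉ μ ↔ κ \ A ∈ μ := by
  constructor
  · intro h
    rcases hμ.2.2.2.2.2 A hAM hAκ with h' | h'
    · exact absurd h' h
    · exact h'
  · intro h hA
    obtain ⟨x, hx1, hx2⟩ := uf_meet hμ hA h
    rw [ZFSet.mem_sdiff] at hx2
    exact hx2.2 hx1

/-- Internal formula: `v Jw` is a witness, i.e. `v Jw ∈ app (v Jfi) (v Jα)` and
`ψ` holds of the tuple `app (v (Jf j)) (v Jα)` extended by `v Jw`. -/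
def witFml {n} (ψ : Fml (n+1)) {m} (Jf : Fin n → Fin m) (Jfi Jα Jw : Fin m) :
    Fml m :=
  .ex ((pairMemFml Jfi.castSucc Jα.castSucc (Fin.last m)).and
    ((Fml.mem Jw.castSucc (Fin.last m)).and
      (substT (Fin.snoc (fun j => TermT.ap (Jf j).castSucc Jα.castSucc)
        (TermT.var Jw.castSucc)) ψ)))

lemma satC_witFml (hM : TransCls M) {n} (ψ : Fml (n+1)) {m}
    (Jf : Fin n → Fin m) (Jfi Jα Jw : Fin m) (v : Fin m → ZFSet)
    (hv : ∀ l, v l ∈ M)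
    (hfn : ∀ j, ∃! b, ZFSet.pair (v Jα) b ∈ v (Jf j))
    (hfni : ∃! b, ZFSet.pair (v Jα) b ∈ v Jfi) :
    SatC M (witFml ψ Jf Jfi Jα Jw) v ↔
      (v Jw ∈ app (v Jfi) (v Jα) ∧
        SatC M ψ (Fin.snoc (fun j => app (v (Jf j)) (v Jα)) (v Jw))) := by
  classical
  have key : ∀ c, c ∈ M →
      (SatC M ((pairMemFml Jfi.castSucc Jα.castSucc (Fin.last m)).and
        ((Fml.mem Jw.castSucc (Fin.last m)).and
          (substT (Fin.snoc (fun j => TermT.ap (Jf j).castSucc Jα.castSucc)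
            (TermT.var Jw.castSucc)) ψ))) (Fin.snoc v c) ↔
      (ZFSet.pair (v Jα) c ∈ v Jfi ∧ v Jw ∈ c ∧
        SatC M ψ (Fin.snoc (fun j => app (v (Jf j)) (v Jα)) (v Jw)))) := by
    intro c hc
    have hvc : ∀ l, (Fin.snoc v c : Fin (m+1) → ZFSet) l ∈ M := snoc_mem_M hv hc
    have hok : ∀ l, TOK (Fin.snoc v c)
        ((Fin.snoc (fun j => TermT.ap (Jf j).castSucc Jα.castSucc)
          (TermT.var Jw.castSucc) : Fin (n+1) → TermT (m+1)) l) := by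
      intro l
      refine Fin.lastCases ?_ (fun j => ?_) l
      · rw [Fin.snoc_last]; trivial
      · rw [Fin.snoc_castSucc]
        simp only [TOK, Fin.snoc_castSucc]
        exact hfn j
    have hvec : (fun l => evalT (Fin.snoc v c)
        ((Fin.snoc (fun j => TermT.ap (Jf j).castSucc Jα.castSucc)
          (TermT.var Jw.castSucc) : Fin (n+1) → TermT (m+1)) l)) =
        Fin.snoc (fun j => app (v (Jf j)) (v Jα)) (v Jw) := by
      funext l
      refine Fin.lastCases ?_ (fun j => ?_) l
      · rw [Fin.snoc_last, Fin.snoc_last]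
        simp only [evalT, Fin.snoc_castSucc]
      · rw [Fin.snoc_castSucc, Fin.snoc_castSucc]
        simp only [evalT, Fin.snoc_castSucc]
    show (SatC M (pairMemFml Jfi.castSucc Jα.castSucc (Fin.last m)) (Fin.snoc v c) ∧
      SatC M (Fml.mem Jw.castSucc (Fin.last m)) (Fin.snoc v c) ∧
      SatC M (substT _ ψ) (Fin.snoc v c)) ↔ _
    rw [satC_pairMemFml hM _ _ _ _ hvc, satC_substT hM _ ψ _ hvc hok, hvec]
    simp only [Fin.snoc_castSucc, Fin.snoc_last]
    have : SatC M (Fml.mem Jw.castSucc (Fin.last m)) (Fin.snoc v c) ↔ v Jw ∈ c := by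
      show ((Fin.snoc v c : Fin (m+1) → ZFSet) Jw.castSucc ∈
        (Fin.snoc v c : Fin (m+1) → ZFSet) (Fin.last m)) ↔ _
      rw [Fin.snoc_castSucc, Fin.snoc_last]
    rw [this]
  constructor
  · rintro ⟨c, hc, hsat⟩
    obtain ⟨h1, h2, h3⟩ := (key c hc).1 hsat
    have : app (v Jfi) (v Jα) = c := app_eq hfni h1
    exact ⟨this ▸ h2, h3⟩
  · rintro ⟨h1, h2⟩
    have hpm : ZFSet.pair (v Jα) (app (v Jfi) (v Jα)) ∈ v Jfi :=
      app_spec hfni.exists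
    have hc : app (v Jfi) (v Jα) ∈ M :=
      (mem_M_of_pair_mem hM (hv Jfi) hpm).2
    exact ⟨_, hc, (key _ hc).2 ⟨hpm, h1, h2⟩⟩

/-- The external "witness" predicate. -/
def EWit (M : Set ZFSet) {κ : ZFSet} {n} (ψ : Fml (n+1)) (fs : Fin n → UPt M κ)
    (i : Fin n) (α a : ZFSet) : Prop :=
  a ∈ app (fs i).1 α ∧ SatC M ψ (Fin.snoc (fun j => app (fs j).1 α) a)

/-- The internal formula used with replacement to produce a choice function:
with parameters `f₀,…,f_{n-1}, r, e` and arguments `α, p`, it says that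
`p = ⟨α, a⟩` where `a` is an `r`-minimal witness at `α` if one exists,
and `a = e` otherwise. -/
def replFml {n} (ψ : Fml (n+1)) (i : Fin n) : Fml (n+4) :=
  Fml.ex (Fml.and
    (pairFml ((Fin.last (n+3)).castSucc)
             ((Fin.last (n+2)).castSucc.castSucc)
             (Fin.last (n+4)))
    (Fml.or
      (Fml.and
        (witFml ψ (fun j => j.castSucc.castSucc.castSucc.castSucc.castSucc)
          (i.castSucc.castSucc.castSucc.castSucc.castSucc)
          ((Fin.last (n+2)).castSucc.castSucc)
          (Fin.last (n+4)))
        (Fml.all (Fml.imp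
          (witFml ψ
            (fun j => j.castSucc.castSucc.castSucc.castSucc.castSucc.castSucc)
            (i.castSucc.castSucc.castSucc.castSucc.castSucc.castSucc)
            ((Fin.last (n+2)).castSucc.castSucc.castSucc)
            (Fin.last (n+5)))
          (Fml.not (pairMemFml
            ((Fin.last n).castSucc.castSucc.castSucc.castSucc.castSucc)
            (Fin.last (n+5)) ((Fin.last (n+4)).castSucc))))))
      (Fml.and
        (Fml.not (Fml.ex (witFml ψ
          (fun j => j.castSucc.castSucc.castSucc.castSucc.castSucc.castSucc)
          (i.castSucc.castSucc.castSucc.castSucc.castSucc.castSucc)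
          ((Fin.last (n+2)).castSucc.castSucc.castSucc)
          (Fin.last (n+5)))))
        (Fml.eq (Fin.last (n+4)) ((Fin.last (n+1)).castSucc.castSucc.castSucc)))))

lemma satC_replFml (hM : TransCls M) (hκM : κ ∈ M) {n} (ψ : Fml (n+1))
    (fs : Fin n → UPt M κ) (i : Fin n) (r : ZFSet) (hrM : r ∈ M)
    (α p : ZFSet) (hα : α ∈ κ) (hp : p ∈ M) :
    SatC M (replFml ψ i)
      (Fin.snoc (Fin.snoc (Fin.snoc (Fin.snoc (fun j => (fs j).1) r) κ) α) p) ↔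
    ∃ a, a ∈ M ∧ p = ZFSet.pair α a ∧
      ((EWit M ψ fs i α a ∧ ∀ w, EWit M ψ fs i α w → ZFSet.pair w a ∉ r) ∨
       ((¬ ∃ w, EWit M ψ fs i α w) ∧ a = κ)) := by
  classical
  have hαM : α ∈ M := hM _ hκM _ hα
  have hEWM : ∀ w, w ∈ app (fs i).1 α → w ∈ M := fun w hw =>
    hM _ (upt_app_mem_M hM (fs i) hα) _ hw
  have hv3 : ∀ a, a ∈ M → ∀ l,
      (Fin.snoc (Fin.snoc (Fin.snoc (Fin.snoc (Fin.snoc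
        (fun j => (fs j).1) r) κ) α) p) a : Fin (n+5) → ZFSet) l ∈ M :=
    fun a ha => snoc_mem_M (snoc_mem_M (snoc_mem_M (snoc_mem_M (snoc_mem_M
      (fun j => (fs j).2.1) hrM) hκM) hαM) hp) ha
  have hwit5 : ∀ a, a ∈ M →
      (SatC M (witFml ψ (fun j => j.castSucc.castSucc.castSucc.castSucc.castSucc)
          (i.castSucc.castSucc.castSucc.castSucc.castSucc)
          ((Fin.last (n+2)).castSucc.castSucc) (Fin.last (n+4)))
        (Fin.snoc (Fin.snoc (Fin.snoc (Fin.snoc (Fin.snoc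
          (fun j => (fs j).1) r) κ) α) p) a) ↔ EWit M ψ fs i α a) := by
    intro a ha
    rw [satC_witFml hM ψ _ _ _ _ _ (hv3 a ha)
      (fun j => by
        simp only [Fin.snoc_castSucc, Fin.snoc_last]
        exact (fs j).2.2.2 α hα)
      (by
        simp only [Fin.snoc_castSucc, Fin.snoc_last]
        exact (fs i).2.2.2 α hα)]
    simp only [Fin.snoc_castSucc, Fin.snoc_last, EWit]
  have hwit6 : ∀ a, a ∈ M → ∀ w, w ∈ M →
      (SatC M (witFml ψ
          (fun j => j.castSucc.castSucc.castSucc.castSucc.castSucc.castSucc)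
          (i.castSucc.castSucc.castSucc.castSucc.castSucc.castSucc)
          ((Fin.last (n+2)).castSucc.castSucc.castSucc) (Fin.last (n+5)))
        (Fin.snoc (Fin.snoc (Fin.snoc (Fin.snoc (Fin.snoc (Fin.snoc
          (fun j => (fs j).1) r) κ) α) p) a) w) ↔ EWit M ψ fs i α w) := by
    intro a ha w hw
    rw [satC_witFml hM ψ _ _ _ _ _ (snoc_mem_M (hv3 a ha) hw)
      (fun j => by
        simp only [Fin.snoc_castSucc, Fin.snoc_last]
        exact (fs j).2.2.2 α hα)
      (by
        simp only [Fin.snoc_castSucc, Fin.snoc_last]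
        exact (fs i).2.2.2 α hα)]
    simp only [Fin.snoc_castSucc, Fin.snoc_last, EWit]
  have hpm6 : ∀ a, a ∈ M → ∀ w, w ∈ M →
      (SatC M (pairMemFml
          ((Fin.last n).castSucc.castSucc.castSucc.castSucc.castSucc)
          (Fin.last (n+5)) ((Fin.last (n+4)).castSucc))
        (Fin.snoc (Fin.snoc (Fin.snoc (Fin.snoc (Fin.snoc (Fin.snoc
          (fun j => (fs j).1) r) κ) α) p) a) w) ↔ ZFSet.pair w a ∈ r) := by
    intro a ha w hw
    rw [satC_pairMemFml hM _ _ _ _ (snoc_mem_M (hv3 a ha) hw)]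
    simp only [Fin.snoc_castSucc, Fin.snoc_last]
  have hpairp : ∀ a, a ∈ M →
      (SatC M (pairFml ((Fin.last (n+3)).castSucc)
          ((Fin.last (n+2)).castSucc.castSucc) (Fin.last (n+4)))
        (Fin.snoc (Fin.snoc (Fin.snoc (Fin.snoc (Fin.snoc
          (fun j => (fs j).1) r) κ) α) p) a) ↔ p = ZFSet.pair α a) := by
    intro a ha
    rw [satC_pairFml hM _ _ _ _ (hv3 a ha)]
    simp only [Fin.snoc_castSucc, Fin.snoc_last]
  constructor
  · rintro ⟨a, haM, h1, h2⟩
    refine ⟨a, haM, (hpairp a haM).1 h1, ?_⟩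
    rw [satC_or] at h2
    rcases h2 with ⟨hx1, hx2⟩ | ⟨hy1, hy2⟩
    · refine Or.inl ⟨(hwit5 a haM).1 hx1, ?_⟩
      intro w hw hpr
      have hwM : w ∈ M := hEWM w hw.1
      have himp := hx2 w hwM
      rw [satC_imp] at himp
      exact himp ((hwit6 a haM w hwM).2 hw) ((hpm6 a haM w hwM).2 hpr)
    · refine Or.inr ⟨?_, ?_⟩
      · rintro ⟨w, hw⟩
        have hwM : w ∈ M := hEWM w hw.1
        exact hy1 ⟨w, hwM, (hwit6 a haM w hwM).2 hw⟩
      · simpa only [SatC, Fin.snoc_castSucc, Fin.snoc_last] using hy2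
  · rintro ⟨a, haM, h1, h2⟩
    refine ⟨a, haM, (hpairp a haM).2 h1, ?_⟩
    rw [satC_or]
    rcases h2 with ⟨hx1, hx2⟩ | ⟨hy1, hy2⟩
    · refine Or.inl ⟨(hwit5 a haM).2 hx1, ?_⟩
      intro w hwM
      rw [satC_imp]
      intro hwit
      have hw : EWit M ψ fs i α w := (hwit6 a haM w hwM).1 hwit
      exact fun hpm => hx2 w hw ((hpm6 a haM w hwM).1 hpm)
    · refine Or.inr ⟨?_, ?_⟩
      · rintro ⟨w, hwM, hwit⟩
        exact hy1 ⟨w, (hwit6 a haM w hwM).1 hwit⟩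
      · show (Fin.snoc (Fin.snoc (Fin.snoc (Fin.snoc (Fin.snoc
          (fun j => (fs j).1) r) κ) α) p) a : Fin (n+5) → ZFSet) (Fin.last (n+4)) =
          (Fin.snoc (Fin.snoc (Fin.snoc (Fin.snoc (Fin.snoc
          (fun j => (fs j).1) r) κ) α) p) a : Fin (n+5) → ZFSet)
          ((Fin.last (n+1)).castSucc.castSucc.castSucc)
        simp only [Fin.snoc_castSucc, Fin.snoc_last]
        exact hy2

lemma pairset_mem_M (hpair : AxPair M) {a b : ZFSet} (ha : a ∈ M) (hb : b ∈ M) :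
    ZFSet.pair a b ∈ M := by
  have h1 : ({a} : ZFSet) ∈ M := by
    have := hpair a ha a ha
    rwa [zfpair_dup] at this
  have h2 : ({a, b} : ZFSet) ∈ M := hpair a ha b hb
  have h3 := hpair _ h1 _ h2
  rwa [← zfpair_def] at h3

lemma choiceFn (hM : TransCls M) (hzfc : ZFCminusRepl M) (hκ : κ ∈ M)
    {n} (ψ : Fml (n+1)) (fs : Fin n → UPt M κ) (i : Fin n) :
    ∃ g : UPt M κ, ∀ α, α ∈ κ → (∃ a, EWit M ψ fs i α a) →
      EWit M ψ fs i α (app g.1 α) := by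
  classical
  obtain ⟨hext, hfound, hpair, hunion, hinf, hsep, hrepl, hwo⟩ := hzfc
  have hfM : (fs i).1 ∈ M := (fs i).2.1
  obtain ⟨W, hWdef, hWM⟩ : ∃ W, W = ZFSet.sUnion (ZFSet.sUnion (ZFSet.sUnion (fs i).1)) ∧
      W ∈ M := ⟨_, rfl, hunion _ (hunion _ (hunion _ hfM))⟩
  obtain ⟨r, hrM, -, hwor⟩ := hwo W hWM
  have hαM : ∀ {α : ZFSet}, α ∈ κ → α ∈ M := fun hα => hM _ hκ _ hα
  have hEWM : ∀ {α w : ZFSet}, α ∈ κ → w ∈ app (fs i).1 α → w ∈ M := fun hα hw =>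
    hM _ (upt_app_mem_M hM (fs i) hα) _ hw
  have hWitW : ∀ {α a : ZFSet}, α ∈ κ → EWit M ψ fs i α a → a ∈ W := by
    intro α a hα ha
    have h0 : ZFSet.pair α (app (fs i).1 α) ∈ (fs i).1 :=
      app_spec (upt_exu (fs i) hα).exists
    rw [hWdef]
    refine ZFSet.mem_sUnion.2 ⟨app (fs i).1 α, ?_, ha.1⟩
    refine ZFSet.mem_sUnion.2 ⟨{α, app (fs i).1 α}, ?_,
      by rw [ZFSet.mem_pair]; exact Or.inr rfl⟩
    refine ZFSet.mem_sUnion.2 ⟨ZFSet.pair α (app (fs i).1 α), h0, ?_⟩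
    rw [zfpair_def, ZFSet.mem_pair]; exact Or.inr rfl
  -- existence and uniqueness of `r`-minimal witnesses
  have hleast : ∀ α, α ∈ κ → (∃ a, EWit M ψ fs i α a) →
      ∃ a, (EWit M ψ fs i α a ∧ ∀ w, EWit M ψ fs i α w → ZFSet.pair w a ∉ r) ∧
        ∀ b, (EWit M ψ fs i α b ∧ ∀ w, EWit M ψ fs i α w → ZFSet.pair w b ∉ r) →
          b = a := by
    rintro α hα ⟨a0, ha0⟩
    have ha0W : a0 ∈ W.toSet := by
      exact hWitW hα ha0
    obtain ⟨mx, hmxS, hmin⟩ := hwor.toIsWellFounded.wf.has_min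
      {x : W.toSet | EWit M ψ fs i α x.1} ⟨⟨a0, ha0W⟩, ha0⟩
    refine ⟨mx.1, ⟨hmxS, fun w hw hws => ?_⟩, ?_⟩
    · exact hmin ⟨w, by exact hWitW hα hw⟩ hw hws
    · rintro b ⟨hbE, hbmin⟩
      have hbW : b ∈ W.toSet := by exact hWitW hα hbE
      rcases @trichotomous _ _ hwor.toTrichotomous ⟨b, hbW⟩ mx with h | h | h
      · exact absurd h (hmin ⟨b, hbW⟩ hbE)
      · exact congrArg Subtype.val h
      · exact absurd h (hbmin mx.1 hmxS)
  have hv0 : ∀ l, (Fin.snoc (Fin.snoc (fun j => (fs j).1) r) κ :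
      Fin (n+2) → ZFSet) l ∈ M :=
    snoc_mem_M (snoc_mem_M (fun j => (fs j).2.1) hrM) hκ
  have hsem := satC_replFml hM hκ ψ fs i r hrM
  -- replacement hypothesis
  have hch : ∀ α, α ∈ κ → ∃! b, b ∈ M ∧ SatC M (replFml ψ i)
      (Fin.snoc (Fin.snoc (Fin.snoc (Fin.snoc (fun j => (fs j).1) r) κ) α) b) := by
    intro α hα
    by_cases hEx : ∃ a, EWit M ψ fs i α a
    · obtain ⟨a, ⟨haE, hamin⟩, hauniq⟩ := hleast α hα hEx
      have haM : a ∈ M := hEWM hα haE.1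
      have hbM : ZFSet.pair α a ∈ M := pairset_mem_M hpair (hαM hα) haM
      refine ⟨ZFSet.pair α a, ⟨hbM, (hsem α _ hα hbM).2
        ⟨a, haM, rfl, Or.inl ⟨haE, hamin⟩⟩⟩, ?_⟩
      rintro b ⟨hbM', hbsat⟩
      obtain ⟨a', ha'M, rfl, hdisj⟩ := (hsem α b hα hbM').1 hbsat
      rcases hdisj with ⟨h1, h2⟩ | ⟨h1, h2⟩
      · rw [hauniq a' ⟨h1, h2⟩]
      · exact absurd hEx h1
    · have hbM : ZFSet.pair α κ ∈ M := pairset_mem_M hpair (hαM hα) hκ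
      refine ⟨ZFSet.pair α κ, ⟨hbM, (hsem α _ hα hbM).2
        ⟨κ, hκ, rfl, Or.inr ⟨hEx, rfl⟩⟩⟩, ?_⟩
      rintro b ⟨hbM', hbsat⟩
      obtain ⟨a', ha'M, rfl, hdisj⟩ := (hsem α b hα hbM').1 hbsat
      rcases hdisj with ⟨h1, h2⟩ | ⟨h1, h2⟩
      · exact absurd ⟨a', h1⟩ hEx
      · rw [h2]
  obtain ⟨B, hBM, hB⟩ := hrepl (n+2) (replFml ψ i)
    (Fin.snoc (Fin.snoc (fun j => (fs j).1) r) κ) hv0 κ hκ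
    (fun α hα => hch α hα)
  -- the key property of `B`
  have hval : ∀ α, α ∈ κ → ∃ a, a ∈ M ∧ ZFSet.pair α a ∈ B ∧
      ((∃ w, EWit M ψ fs i α w) → EWit M ψ fs i α a) ∧
      ∀ c, ZFSet.pair α c ∈ B → c = a := by
    intro α hα
    have huniqmem : ∀ a, (SatC M (replFml ψ i)
        (Fin.snoc (Fin.snoc (Fin.snoc (Fin.snoc (fun j => (fs j).1) r) κ) α)
          (ZFSet.pair α a))) → ∀ c, ZFSet.pair α c ∈ B → c = a := by
      intro a hsat c hc
      have hcM : ZFSet.pair α c ∈ M := hM _ hBM _ hc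
      obtain ⟨α', hα', hsat'⟩ := (hB _).1 hc
      obtain ⟨a', ha'M, heq, hdisj⟩ := (hsem α' _ hα' hcM).1 hsat'
      obtain ⟨h1, h2⟩ := ZFSet.pair_injective heq
      subst h1; subst h2
      have hpM : ZFSet.pair α a ∈ M := by
        ·  exact hM _ hBM _ ((hB _).2 ⟨α, hα, hsat⟩)
      obtain ⟨a2, ha2M, heq2, hdisj2⟩ := (hsem α _ hα hpM).1 hsat
      obtain ⟨-, h4⟩ := ZFSet.pair_injective heq2
      subst h4
      rcases hdisj with ⟨hL, hLm⟩ | ⟨hN, rfl⟩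
      · rcases hdisj2 with ⟨hL2, hLm2⟩ | ⟨hN2, rfl⟩
        · obtain ⟨am, -, hau⟩ := hleast α hα ⟨_, hL⟩
          rw [hau _ ⟨hL, hLm⟩, hau _ ⟨hL2, hLm2⟩]
        · exact absurd ⟨_, hL⟩ hN2
      · rcases hdisj2 with ⟨hL2, hLm2⟩ | ⟨hN2, rfl⟩
        · exact absurd ⟨_, hL2⟩ hN
        · rfl
    by_cases hEx : ∃ a, EWit M ψ fs i α a
    · obtain ⟨a, ⟨haE, hamin⟩, -⟩ := hleast α hα hEx
      have haM : a ∈ M := hEWM hα haE.1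
      have hbM : ZFSet.pair α a ∈ M := pairset_mem_M hpair (hαM hα) haM
      have hsat := (hsem α _ hα hbM).2 ⟨a, haM, rfl, Or.inl ⟨haE, hamin⟩⟩
      exact ⟨a, haM, (hB _).2 ⟨α, hα, hsat⟩, fun _ => haE, huniqmem a hsat⟩
    · have hbM : ZFSet.pair α κ ∈ M := pairset_mem_M hpair (hαM hα) hκ
      have hsat := (hsem α _ hα hbM).2 ⟨κ, hκ, rfl, Or.inr ⟨hEx, rfl⟩⟩
      exact ⟨κ, hκ, (hB _).2 ⟨α, hα, hsat⟩, fun h => absurd h hEx,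
        huniqmem κ hsat⟩
  have hfn : IsFnOn κ B := by
    constructor
    · intro q hq
      obtain ⟨α', hα', hsat⟩ := (hB q).1 hq
      have hqM : q ∈ M := hM _ hBM _ hq
      obtain ⟨a', ha'M, heq, -⟩ := (hsem α' q hα' hqM).1 hsat
      exact ⟨α', hα', a', heq⟩
    · intro α hα
      obtain ⟨a, haM, hmem, -, huniq⟩ := hval α hα
      exact ⟨a, hmem, fun c hc => huniq c hc⟩
  refine ⟨⟨B, hBM, hfn⟩, ?_⟩
  intro α hα hEx
  obtain ⟨a, haM, hmem, hEWa, huniq⟩ := hval α hα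
  have happ : app B α = a := app_eq (hfn.2 α hα) hmem
  show EWit M ψ fs i α (app B α)
  rw [happ]
  exact hEWa hEx

end Aux

/-- the Łoś theorem holds for Δ₀ formulas for ultrapowers of a
transitive model of ZFC⁻ (replacement version) by an M-ultrafilter. -/
theorem los_delta0 (M : Set ZFSet) (hM : TransCls M) (hzfc : ZFCminusRepl M)
    (κ : ZFSet) (hκ : κ ∈ M) (hcard : IsCardinalIn M κ)
    (μ : Set ZFSet) (hμ : MUltrafilter M κ μ) :
    ∀ {n : ℕ} (φ : Fml n), IsDelta0 φ → ∀ fs : Fin n → UPt M κ,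
      (Sat2 (upEq κ μ) (upMem κ μ) φ fs ↔
        ZFSet.sep (fun α => SatC M φ (fun i => app (fs i).1 α)) κ ∈ μ) := by
  have hsepAx : AxSep M := hzfc.2.2.2.2.2.1
  have hvecL : ∀ {m : ℕ} (fs : Fin m → UPt M κ) (g : UPt M κ) (z : ZFSet),
      (fun l => app ((Fin.snoc fs g : Fin (m+1) → UPt M κ) l).1 z) =
      Fin.snoc (fun j => app ((fs j).1) z) (app g.1 z) := by
    intro m fs g z
    funext l
    refine Fin.lastCases ?_ (fun j => ?_) l <;>
      simp [Fin.snoc_last, Fin.snoc_castSucc]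
  have hupMemM : ∀ (g h : UPt M κ),
      ZFSet.sep (fun α => app g.1 α ∈ app h.1 α) κ ∈ M := by
    intro g h
    have h2 := sep_satC_mem_M hM hsepAx hκ (Fml.mem (0 : Fin 2) 1)
      (fun l : Fin 2 => if l = 0 then g else h)
    have he : (fun α => SatC M (Fml.mem (0 : Fin 2) 1)
        (fun l => app ((if l = 0 then g else h) : UPt M κ).1 α)) =
        fun α => app g.1 α ∈ app h.1 α := by
      funext α
      show (app (if (0 : Fin 2) = 0 then g else h).1 α ∈
        app (if (1 : Fin 2) = 0 then g else h).1 α) = _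
      norm_num
    rw [he] at h2
    exact h2
  intro n φ hφ
  induction hφ with
  | mem i j => intro fs; exact Iff.rfl
  | eq i j => intro fs; exact Iff.rfl
  | not h ih =>
      rename_i n' φ'
      intro fs
      have hS : ZFSet.sep (fun α => SatC M φ' (fun j => app (fs j).1 α)) κ ∈ M :=
        sep_satC_mem_M hM hsepAx hκ φ' fs
      have hdiffeq : ZFSet.sep (fun α => SatC M (Fml.not φ')
          (fun j => app (fs j).1 α)) κ =
          κ \ ZFSet.sep (fun α => SatC M φ' (fun j => app (fs j).1 α)) κ := by
        apply ZFSet.ext; intro z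
        simp only [ZFSet.mem_sep, ZFSet.mem_sdiff, SatC]
        tauto
      show (¬ Sat2 (upEq κ μ) (upMem κ μ) φ' fs) ↔ _
      rw [ih fs, hdiffeq]
      exact uf_not_iff hμ hS (sep_sub _ _)
  | and h1 h2 ih1 ih2 =>
      rename_i n' φ' ψ'
      intro fs
      have hSφ : ZFSet.sep (fun α => SatC M φ' (fun j => app (fs j).1 α)) κ ∈ M :=
        sep_satC_mem_M hM hsepAx hκ φ' fs
      have hSψ : ZFSet.sep (fun α => SatC M ψ' (fun j => app (fs j).1 α)) κ ∈ M :=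
        sep_satC_mem_M hM hsepAx hκ ψ' fs
      have hinter : ZFSet.sep (fun α => SatC M (Fml.and φ' ψ')
          (fun j => app (fs j).1 α)) κ =
          ZFSet.sep (fun α => SatC M φ' (fun j => app (fs j).1 α)) κ ∩
          ZFSet.sep (fun α => SatC M ψ' (fun j => app (fs j).1 α)) κ := by
        apply ZFSet.ext; intro z
        simp only [ZFSet.mem_sep, ZFSet.mem_inter, SatC]
        tauto
      show (Sat2 (upEq κ μ) (upMem κ μ) φ' fs ∧
        Sat2 (upEq κ μ) (upMem κ μ) ψ' fs) ↔ _
      rw [ih1 fs, ih2 fs, hinter]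
      constructor
      · rintro ⟨ha, hb⟩
        exact hμ.2.2.2.2.1 _ ha _ hb
      · intro hab
        constructor
        · exact hμ.2.2.2.1 _ hab _ hSφ (sep_sub _ _)
            (fun z hz => (ZFSet.mem_inter.1 hz).1)
        · exact hμ.2.2.2.1 _ hab _ hSψ (sep_sub _ _)
            (fun z hz => (ZFSet.mem_inter.1 hz).2)
  | ball i h ih =>
      rename_i n' φ'
      intro fs
      have hwitx : ∀ z, z ∈ κ →
          z ∉ ZFSet.sep (fun α => SatC M (Fml.ball i φ')
            (fun j => app (fs j).1 α)) κ →
          ∃ a, EWit M (Fml.not φ') fs i z a := by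
        intro z hzκ hzS
        by_contra hno
        apply hzS
        rw [ZFSet.mem_sep]
        refine ⟨hzκ, ?_⟩
        intro a haM hav
        by_contra hnot
        exact hno ⟨a, hav, hnot⟩
      constructor
      · intro hyp
        by_contra hS
        have hSM := sep_satC_mem_M hM hsepAx hκ (Fml.ball i φ') fs
        have hdiff : κ \ ZFSet.sep (fun α => SatC M (Fml.ball i φ')
            (fun j => app (fs j).1 α)) κ ∈ μ :=
          (uf_not_iff hμ hSM (sep_sub _ _)).1 hS
        obtain ⟨g, hg⟩ := choiceFn hM hzfc hκ (Fml.not φ') fs i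
        have hsubset : κ \ ZFSet.sep (fun α => SatC M (Fml.ball i φ')
            (fun j => app (fs j).1 α)) κ ⊆
            ZFSet.sep (fun α => app g.1 α ∈ app (fs i).1 α) κ := by
          intro z hz
          rw [ZFSet.mem_sdiff] at hz
          rw [ZFSet.mem_sep]
          exact ⟨hz.1, (hg z hz.1 (hwitx z hz.1 hz.2)).1⟩
        have hup : upMem κ μ g (fs i) :=
          hμ.2.2.2.1 _ hdiff _ (hupMemM g (fs i)) (sep_sub _ _) hsubset
        have hSg := (ih (Fin.snoc fs g)).1 (hyp g hup)
        obtain ⟨β, hβ1, hβ2⟩ := uf_meet hμ hSg hdiff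
        rw [ZFSet.mem_sep] at hβ1
        rw [ZFSet.mem_sdiff] at hβ2
        have hβsat := hβ1.2
        rw [hvecL fs g β] at hβsat
        exact (hg β hβ2.1 (hwitx β hβ2.1 hβ2.2)).2 hβsat
      · intro hS g hup
        apply (ih (Fin.snoc fs g)).2
        have hint : ZFSet.sep (fun α => SatC M (Fml.ball i φ')
            (fun j => app (fs j).1 α)) κ ∩
            ZFSet.sep (fun α => app g.1 α ∈ app (fs i).1 α) κ ∈ μ :=
          hμ.2.2.2.2.1 _ hS _ hup
        have hSnew := sep_satC_mem_M hM hsepAx hκ φ' (Fin.snoc fs g)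
        refine hμ.2.2.2.1 _ hint _ hSnew (sep_sub _ _) ?_
        intro z hz
        rw [ZFSet.mem_inter] at hz
        obtain ⟨hz1, hz2⟩ := hz
        rw [ZFSet.mem_sep] at hz1 hz2 ⊢
        refine ⟨hz1.1, ?_⟩
        rw [hvecL fs g z]
        exact hz1.2 (app g.1 z) (upt_app_mem_M hM g hz1.1) hz2.2
  | bex i h ih =>
      rename_i n' φ'
      intro fs
      constructor
      · rintro ⟨g, hup, hsat⟩
        have hSg := (ih (Fin.snoc fs g)).1 hsat
        have hint : ZFSet.sep (fun α => SatC M φ'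
            (fun l => app ((Fin.snoc fs g : Fin (n'+1) → UPt M κ) l).1 α)) κ ∩
            ZFSet.sep (fun α => app g.1 α ∈ app (fs i).1 α) κ ∈ μ :=
          hμ.2.2.2.2.1 _ hSg _ hup
        have hSbex := sep_satC_mem_M hM hsepAx hκ (Fml.bex i φ') fs
        refine hμ.2.2.2.1 _ hint _ hSbex (sep_sub _ _) ?_
        intro z hz
        rw [ZFSet.mem_inter] at hz
        obtain ⟨hz1, hz2⟩ := hz
        rw [ZFSet.mem_sep] at hz1 hz2 ⊢
        refine ⟨hz1.1, ?_⟩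
        have hz1' := hz1.2
        rw [hvecL fs g z] at hz1'
        exact ⟨app g.1 z, upt_app_mem_M hM g hz1.1, hz2.2, hz1'⟩
      · intro hS
        obtain ⟨g, hg⟩ := choiceFn hM hzfc hκ φ' fs i
        have hwit : ∀ z, z ∈ ZFSet.sep (fun α => SatC M (Fml.bex i φ')
            (fun j => app (fs j).1 α)) κ → ∃ a, EWit M φ' fs i z a := by
          intro z hz
          rw [ZFSet.mem_sep] at hz
          obtain ⟨a, haM, hav, hsat⟩ := hz.2
          exact ⟨a, hav, hsat⟩
        have hup : upMem κ μ g (fs i) := by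
          refine hμ.2.2.2.1 _ hS _ (hupMemM g (fs i)) (sep_sub _ _) ?_
          intro z hz
          have hzκ := (ZFSet.mem_sep.1 hz).1
          rw [ZFSet.mem_sep]
          exact ⟨hzκ, (hg z hzκ (hwit z hz)).1⟩
        refine ⟨g, hup, ?_⟩
        apply (ih (Fin.snoc fs g)).2
        have hSnew := sep_satC_mem_M hM hsepAx hκ φ' (Fin.snoc fs g)
        refine hμ.2.2.2.1 _ hS _ hSnew (sep_sub _ _) ?_
        intro z hz
        have hzκ := (ZFSet.mem_sep.1 hz).1
        rw [ZFSet.mem_sep]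
        refine ⟨hzκ, ?_⟩
        rw [hvecL fs g z]
        exact (hg z hzκ (hwit z hz)).2
end
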